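/- Let n ≥ 2, p_e ∈ (0,1), p_d ∈ [1/2,1) and p_a ∈ (0,1). The direction-edge random digraph D(n,p_e,p_d) equals the arc random digraph D(n,p_a) (as distributions on digraphs on [n]) if and only if p_d = 1/(1+√(1−p_e)) and p_a = 1 − √(1−p_e). -/

import Mathlib

open Finset

/-- A finset of ordered pairs is (the arc set of) a digraph on `Fin n` if it has no loops. -/
def IsDigraph {n : ℕ} (A : Finset (Fin n × Fin n)) : Prop := ∀ p ∈ A, p.1 ≠ p.2

/-- The number of symmetric arc pairs of a digraph: unordered pairs `{i,j}` with both
`(i,j)` and `(j,i)` present. -/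
def nS {n : ℕ} (A : Finset (Fin n × Fin n)) : ℕ :=
  (A.filter fun p => (p.2, p.1) ∈ A ∧ p.1 < p.2).card

/-- The number of asymmetric arcs of a digraph: arcs `(i,j)` with `(j,i)` absent. -/
def nAS {n : ℕ} (A : Finset (Fin n × Fin n)) : ℕ :=
  (A.filter fun p => (p.2, p.1) ∉ A).card

/-- The number of edges of the underlying graph of a digraph. -/
def nE {n : ℕ} (A : Finset (Fin n × Fin n)) : ℕ := nS A + nAS A

/-- Probability assigned to the digraph with arc set `A` by the direction-edge random digraph
`D(n, p_e, p_d)`. -/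
def derdP (n : ℕ) (pe pd : ℝ) (A : Finset (Fin n × Fin n)) : ℝ :=
  pe ^ nE A * (1 - pe) ^ (n.choose 2 - nE A) * (1 - pd) ^ nAS A * (2 * pd - 1) ^ nS A

/-- Probability assigned to the digraph with arc set `A` by the arc random digraph
`D(n, p_a)`. -/
def ardP (n : ℕ) (pa : ℝ) (A : Finset (Fin n × Fin n)) : ℝ :=
  pa ^ A.card * (1 - pa) ^ (n * (n - 1) - A.card)

lemma two_mul_choose (n : ℕ) : 2 * n.choose 2 = n * (n - 1) := by
  have h := Nat.choose_two_right n
  have he : Even (n * (n - 1)) := by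
    rcases Nat.even_or_odd n with h' | h'
    · exact h'.mul_right _
    · exact (Nat.Odd.sub_odd h' odd_one).mul_left _
  obtain ⟨k, hk⟩ := he
  omega

lemma card_eq_aux {n : ℕ} (A : Finset (Fin n × Fin n)) (h : IsDigraph A) :
    A.card = 2 * nS A + nAS A := by
  classical
  have h1 := Finset.card_filter_add_card_filter_not
    (s := A) (p := fun p => (p.2, p.1) ∈ A)
  have h2 := Finset.card_filter_add_card_filter_not
    (s := A.filter fun p => (p.2, p.1) ∈ A) (p := fun p : Fin n × Fin n => p.1 < p.2)
  have e1 : ((A.filter fun p => (p.2, p.1) ∈ A).filter fun p => p.1 < p.2)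
      = A.filter (fun p => (p.2, p.1) ∈ A ∧ p.1 < p.2) := Finset.filter_filter _ _ _
  have e2 : ((A.filter fun p => (p.2, p.1) ∈ A).filter fun p => ¬ p.1 < p.2).card = nS A := by
    apply Finset.card_bij (fun p _ => (p.2, p.1))
    · intro p hp
      simp only [Finset.mem_filter] at hp ⊢
      obtain ⟨⟨hpA, hrev⟩, hlt⟩ := hp
      have hne := h p hpA
      refine ⟨hrev, hpA, ?_⟩
      exact lt_of_le_of_ne (not_lt.mp hlt) (Ne.symm hne)
    · intro p hp q hq hpq
      simp only [Prod.mk.injEq] at hpq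
      exact Prod.ext hpq.2 hpq.1
    · intro q hq
      simp only [Finset.mem_filter, nS] at hq ⊢
      exact ⟨(q.2, q.1), ⟨⟨hq.2.1, hq.1⟩, not_lt.mpr (le_of_lt hq.2.2)⟩, rfl⟩
  rw [e1] at h2
  have e0 : (A.filter fun p => (p.2, p.1) ∈ A ∧ p.1 < p.2).card = nS A := rfl
  have e0' : (A.filter fun p => (p.2, p.1) ∉ A).card = nAS A := rfl
  omega

lemma card_lt_pairs (n : ℕ) :
    (Finset.univ.filter fun p : Fin n × Fin n => p.1 < p.2).card = n.choose 2 := by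
  classical
  have hoff : (Finset.univ : Finset (Fin n)).offDiag
      = Finset.univ.filter (fun p : Fin n × Fin n => p.1 ≠ p.2) := by
    ext p; simp [Finset.mem_offDiag]
  have hcard : (Finset.univ : Finset (Fin n)).offDiag.card = n * n - n := by
    rw [Finset.offDiag_card]; simp
  have h2 := Finset.card_filter_add_card_filter_not
    (s := (Finset.univ : Finset (Fin n)).offDiag)
    (p := fun p : Fin n × Fin n => p.1 < p.2)
  have e1 : ((Finset.univ : Finset (Fin n)).offDiag.filter fun p => p.1 < p.2)
      = Finset.univ.filter fun p : Fin n × Fin n => p.1 < p.2 := by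
    rw [hoff, Finset.filter_filter]
    ext p
    simp only [Finset.mem_filter, Finset.mem_univ, true_and]
    exact ⟨fun h => h.2, fun h => ⟨ne_of_lt h, h⟩⟩
  have e2 : ((Finset.univ : Finset (Fin n)).offDiag.filter fun p => ¬ p.1 < p.2).card
      = (Finset.univ.filter fun p : Fin n × Fin n => p.1 < p.2).card := by
    apply Finset.card_bij (fun p _ => (p.2, p.1))
    · intro p hp
      rw [hoff] at hp
      simp only [Finset.mem_filter, Finset.mem_univ, true_and] at hp ⊢
      exact lt_of_le_of_ne (not_lt.mp hp.2) (Ne.symm hp.1)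
    · intro p hp q hq hpq
      simp only [Prod.mk.injEq] at hpq
      exact Prod.ext hpq.2 hpq.1
    · intro q hq
      simp only [Finset.mem_filter, Finset.mem_univ, true_and] at hq
      refine ⟨(q.2, q.1), ?_, rfl⟩
      rw [hoff]
      simp only [Finset.mem_filter, Finset.mem_univ, true_and]
      exact ⟨ne_of_gt hq, not_lt.mpr (le_of_lt hq)⟩
  rw [e1, e2, hcard] at h2
  have hc := two_mul_choose n
  have hmn : n * (n - 1) = n * n - n := by
    cases n with
    | zero => rfl
    | succ m => rw [Nat.succ_sub_one, Nat.mul_succ]; omega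
  omega

lemma nE_le {n : ℕ} (A : Finset (Fin n × Fin n)) (h : IsDigraph A) :
    nE A ≤ n.choose 2 := by
  classical
  rw [← card_lt_pairs n]
  have hunion : nE A
      = (A.filter fun p => ((p.2, p.1) ∈ A ∧ p.1 < p.2) ∨ (p.2, p.1) ∉ A).card := by
    rw [Finset.filter_or, Finset.card_union_of_disjoint]
    · rfl
    · rw [Finset.disjoint_left]
      intro p hp1 hp2
      simp only [Finset.mem_filter] at hp1 hp2
      exact hp2.2 hp1.2.1
  rw [hunion]
  apply Finset.card_le_card_of_injOn (fun p => if p.1 < p.2 then p else (p.2, p.1))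
  · intro p hp
    simp only [Finset.mem_coe, Finset.mem_filter] at hp ⊢
    have hne := h p hp.1
    by_cases hlt : p.1 < p.2
    · simp [hlt]
    · simp only [hlt, if_false, Finset.mem_filter, Finset.mem_univ, true_and]
      exact lt_of_le_of_ne (not_lt.mp hlt) (Ne.symm hne)
  · intro p hp q hq hpq
    simp only [Finset.coe_filter, Set.mem_setOf_eq] at hp hq
    by_cases hlp : p.1 < p.2 <;> by_cases hlq : q.1 < q.2 <;>
      simp only [hlp, hlq, if_true, if_false] at hpq
    · exact hpq
    · -- p = (q.2, q.1); q's condition forces (q.2,q.1) ∉ A, but p ∈ A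
      exfalso
      rcases hq.2 with ⟨_, hlt⟩ | hrev
      · exact hlq hlt
      · rw [← hpq] at hrev; exact hrev hp.1
    · exfalso
      rcases hp.2 with ⟨_, hlt⟩ | hrev
      · exact hlp hlt
      · rw [hpq] at hrev; exact hrev hq.1
    · simp only [Prod.mk.injEq] at hpq
      exact Prod.ext hpq.2 hpq.1

/-- A direction-edge random digraph `D(n, p_e, p_d)` is the arc random digraph `D(n, p_a)`
if and only if `p_d = 1/(1+√(1-p_e))` and `p_a = 1 - √(1-p_e)`. -/
theorem stmt5 {n : ℕ} (hn : 2 ≤ n) {pe pd pa : ℝ}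
    (hpe0 : 0 < pe) (hpe1 : pe < 1) (hpd0 : 1 / 2 ≤ pd) (hpd1 : pd < 1)
    (hpa0 : 0 < pa) (hpa1 : pa < 1) :
    (∀ A : Finset (Fin n × Fin n), IsDigraph A → derdP n pe pd A = ardP n pa A) ↔
      (pd = 1 / (1 + Real.sqrt (1 - pe)) ∧ pa = 1 - Real.sqrt (1 - pe)) := by
  have hC1 : 0 < n.choose 2 := Nat.choose_pos hn
  have h2C := two_mul_choose n
  constructor
  · intro h
    -- empty digraph
    have h0 := h ∅ (by intro p hp; simp at hp)
    have hnS0 : nS (∅ : Finset (Fin n × Fin n)) = 0 := by simp [nS]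
    have hnAS0 : nAS (∅ : Finset (Fin n × Fin n)) = 0 := by simp [nAS]
    simp only [derdP, ardP, nE, hnS0, hnAS0, Finset.card_empty, Nat.add_zero, pow_zero,
      mul_one, one_mul, Nat.sub_zero] at h0
    -- h0 : (1-pe)^C = (1-pa)^(n*(n-1))
    have hbase : 1 - pe = (1 - pa) ^ 2 := by
      have h0' : (1 - pe) ^ n.choose 2 = ((1 - pa) ^ 2) ^ n.choose 2 := by
        rw [← pow_mul, h0]
        congr 1
        omega
      exact (pow_left_inj₀ (by linarith) (by positivity) hC1.ne').mp h0'
    have hsqrt : Real.sqrt (1 - pe) = 1 - pa := by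
      rw [hbase, Real.sqrt_sq (by linarith)]
    -- singleton digraph
    set i0 : Fin n := ⟨0, by omega⟩
    set i1 : Fin n := ⟨1, by omega⟩
    have hne : i0 ≠ i1 := by simp [i0, i1, Fin.ext_iff]
    have h1 := h {(i0, i1)} (by
      intro p hp
      simp only [Finset.mem_singleton] at hp
      rw [hp]; exact hne)
    have hnS1 : nS ({(i0, i1)} : Finset (Fin n × Fin n)) = 0 := by
      simp [nS, Finset.filter_singleton, Prod.ext_iff, hne.symm]
    have hnAS1 : nAS ({(i0, i1)} : Finset (Fin n × Fin n)) = 1 := by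
      simp [nAS, Finset.filter_singleton, Prod.ext_iff, hne.symm]
    simp only [derdP, ardP, nE, hnS1, hnAS1, Finset.card_singleton, pow_one, pow_zero,
      mul_one, Nat.add_zero, Nat.zero_add] at h1
    -- h1 : pe * (1-pe)^(C-1) * (1-pd) = pa * (1-pa)^(n*(n-1)-1)
    have hexp : n * (n - 1) - 1 = 2 * (n.choose 2 - 1) + 1 := by omega
    have hrw : (1 - pa) ^ (n * (n - 1) - 1) = (1 - pe) ^ (n.choose 2 - 1) * (1 - pa) := by
      rw [hexp, pow_succ, pow_mul, ← hbase]
    rw [hrw] at h1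
    have hpos : (0 : ℝ) < (1 - pe) ^ (n.choose 2 - 1) := pow_pos (by linarith) _
    have h2 : pe * (1 - pd) = pa * (1 - pa) := by
      apply mul_right_cancel₀ hpos.ne'
      linear_combination h1
    have hpe' : pe = pa * (2 - pa) := by linear_combination -hbase
    have h3 : (2 - pa) * (1 - pd) = 1 - pa := by
      apply mul_left_cancel₀ hpa0.ne'
      linear_combination h2 - (1 - pd) * hpe'
    refine ⟨?_, by rw [hsqrt]; ring⟩
    rw [hsqrt]
    have hden : (1 : ℝ) + (1 - pa) ≠ 0 := ne_of_gt (by linarith)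
    rw [eq_div_iff hden]
    linear_combination -h3
  · rintro ⟨hpd, hpa⟩ A hA
    set q := Real.sqrt (1 - pe) with hqdef
    have hq0 : 0 < q := Real.sqrt_pos.mpr (by linarith)
    have hq2 : q ^ 2 = 1 - pe := Real.sq_sqrt (by linarith)
    have hq1 : q < 1 := by nlinarith
    have h1q : (0 : ℝ) < 1 + q := by linarith
    have hpe' : pe = 1 - q ^ 2 := by linarith
    have hcard := card_eq_aux A hA
    have hle := nE_le A hA
    have hkey : n * (n - 1) - A.card = 2 * (n.choose 2 - nE A) + nAS A := by
      unfold nE at hle ⊢; omega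
    unfold derdP ardP
    rw [hkey, hcard, hpa, hpd, hpe']
    set s := nS A
    set a := nAS A
    set k := n.choose 2 - nE A
    have hnE : nE A = s + a := rfl
    rw [hnE]
    have e1 : 1 - (1 / (1 + q)) = q / (1 + q) := by field_simp; ring
    have e2 : 2 * (1 / (1 + q)) - 1 = (1 - q) / (1 + q) := by field_simp; ring
    have e3 : 1 - (1 - q ^ 2) = q ^ 2 := by ring
    have e4 : 1 - (1 - q) = q := by ring
    rw [e1, e2, e3, e4]
    have e5 : 1 - q ^ 2 = (1 - q) * (1 + q) := by ring
    rw [e5, div_pow, div_pow, mul_pow]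
    rw [pow_add (1-q), pow_add (1+q)]
    have e6 : (1 - q) ^ (2 * s + a) = (1 - q) ^ s * (1 - q) ^ s * (1 - q) ^ a := by
      rw [← pow_add, ← pow_add]; ring_nf
    have e7 : q ^ (2 * k + a) = (q ^ 2) ^ k * q ^ a := by
      rw [← pow_mul, ← pow_add]
    rw [e6, e7]
    have hne1 : ((1 + q) ^ a : ℝ) ≠ 0 := by positivity
    have hne2 : ((1 + q) ^ s : ℝ) ≠ 0 := by positivity
    field_simp
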